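/- Let S ⊆ ℝ² be a finite set with |S| = n and K ⊆ ℝ² a finite set with |K| ≤ 3 and S ∩ K = ∅. Let s, s' be natural numbers with s = 2s', s' ≥ 4, s ≤ n, and set p = s/n. For an affinely independent triple u of points of S ∪ K, let b_u = |{q ∈ S ∪ K : dist(c(u), q) < ρ(u)}| and define the excess t_u = b_u · s/n; say u is active in W if u ⊆ W and B_u ∩ W = ∅. Let R be a uniformly random s-element subset of S and R' a uniformly random s'-element subset of S. Then E[ Σ_{u active in R ∪ K} t_u · ln(t_u) ] ≤ 64 · (Σ_{i=0}^{∞} e^{−i/2}(i+1)²) · E[ number of triples u active in R' ∪ K ], where the first sum ranges over active triples u with t_u ≥ 1 and ln denotes the natural logarithm. -/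

import Mathlib

open scoped Classical


lemma my_choose_pred_mul (M k : ℕ) (hM : 0 < M) :
    M * (M-1).choose k = (M - k) * M.choose k := by
  obtain ⟨m, rfl⟩ := Nat.exists_eq_succ_of_ne_zero hM.ne'
  simp only [Nat.succ_sub_one]
  rw [Nat.add_one_mul_choose_eq m k, Nat.choose_succ_right_eq]
  exact Nat.mul_comm _ _

lemma my_lemA (n k : ℕ) (hn : 0 < n) : ∀ (b M : ℕ), k + b ≤ M → M ≤ n →
    (((M - b).choose k : ℝ)) ≤ (1 - (k:ℝ)/(n:ℝ))^b * (M.choose k : ℝ) := by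
  intro b
  induction b with
  | zero => intro M _ _; simp
  | succ b ih =>
    intro M hkb hMn
    have hM1 : 0 < M := by omega
    have hn' : (0:ℝ) < n := by exact_mod_cast hn
    have hMpos : (0:ℝ) < M := by exact_mod_cast hM1
    have hcast : (M : ℝ) * ((M-1).choose k : ℝ) = ((M:ℝ) - k) * (M.choose k : ℝ) := by
      have h := congrArg (fun x : ℕ => (x:ℝ)) (my_choose_pred_mul M k hM1)
      push_cast [Nat.cast_sub (show k ≤ M by omega)] at h
      exact h
    have hk1 : (k:ℝ)/n ≤ 1 := by
      rw [div_le_one hn']; exact_mod_cast (show k ≤ n by omega)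
    have hfrac : ((M:ℝ) - k)/M ≤ 1 - (k:ℝ)/n := by
      rw [div_le_iff₀ hMpos, sub_mul, one_mul]
      have hMn' : (M:ℝ) ≤ n := by exact_mod_cast hMn
      have : (k:ℝ)/n * M ≤ k := by
        rw [div_mul_eq_mul_div, div_le_iff₀ hn']; nlinarith [show (0:ℝ) ≤ k by positivity]
      linarith
    have hstep : ((M-1).choose k : ℝ) ≤ (1 - (k:ℝ)/(n:ℝ)) * (M.choose k : ℝ) := by
      calc ((M-1).choose k : ℝ) = ((M:ℝ) - k) / M * (M.choose k : ℝ) := by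
            field_simp; linarith [hcast]
        _ ≤ (1 - (k:ℝ)/n) * (M.choose k : ℝ) :=
            mul_le_mul_of_nonneg_right hfrac (by positivity)
    have hrw : M - (b+1) = (M - 1) - b := by omega
    calc (((M - (b+1)).choose k : ℝ)) = (((M-1) - b).choose k : ℝ) := by rw [hrw]
      _ ≤ (1 - (k:ℝ)/n)^b * ((M-1).choose k : ℝ) := ih (M-1) (by omega) (by omega)
      _ ≤ (1 - (k:ℝ)/n)^b * ((1 - (k:ℝ)/n) * (M.choose k : ℝ)) :=
          mul_le_mul_of_nonneg_left hstep (pow_nonneg (by linarith) b)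
      _ = (1 - (k:ℝ)/n)^(b+1) * (M.choose k : ℝ) := by ring


lemma my_choose_step (x y : ℕ) (h0 : 0 < y) (hxy : y ≤ x) (h4 : x ≤ 4*y) :
    x.choose y ≤ 4 * (x-1).choose (y-1) := by
  obtain ⟨m, rfl⟩ := Nat.exists_eq_succ_of_ne_zero (show x ≠ 0 by omega)
  obtain ⟨j, rfl⟩ := Nat.exists_eq_succ_of_ne_zero h0.ne'
  simp only [Nat.succ_sub_one]
  have h1 : (m+1).choose (j+1) * (j+1) = (m+1) * m.choose j := (Nat.add_one_mul_choose_eq m j).symm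
  have h3 : (m+1).choose (j+1) * (j+1) ≤ (4 * m.choose j) * (j+1) := by
    rw [h1]
    calc (m+1) * m.choose j ≤ (4*(j+1)) * m.choose j :=
          Nat.mul_le_mul_right _ h4
      _ = (4 * m.choose j) * (j+1) := by ring
  exact Nat.le_of_mul_le_mul_right h3 (by omega)

lemma my_lemB (s' : ℕ) (hs' : 4 ≤ s') : ∀ a, a ≤ 3 →
    (2*s').choose s' ≤ 4^a * ((2*s' - a).choose (s' - a)) := by
  intro a
  induction a with
  | zero => intro _; simp
  | succ a ih =>
    intro ha
    have hstep : (2*s' - a).choose (s' - a) ≤ 4 * ((2*s' - (a+1)).choose (s' - (a+1))) := by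
      have := my_choose_step (2*s' - a) (s' - a) (by omega) (by omega) (by omega)
      have e1 : 2*s' - a - 1 = 2*s' - (a+1) := by omega
      have e2 : s' - a - 1 = s' - (a+1) := by omega
      rwa [e1, e2] at this
    calc (2*s').choose s' ≤ 4^a * ((2*s' - a).choose (s' - a)) := ih (by omega)
      _ ≤ 4^a * (4 * ((2*s' - (a+1)).choose (s' - (a+1)))) := Nat.mul_le_mul_left _ hstep
      _ = 4^(a+1) * ((2*s' - (a+1)).choose (s' - (a+1))) := by ring

lemma my_summable : Summable (fun i : ℕ => Real.exp (-(i:ℝ)/2) * ((i:ℝ)+1)^2) := by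
  have hr : ‖Real.exp (-(1:ℝ)/2)‖ < 1 := by
    rw [Real.norm_eq_abs, abs_of_pos (Real.exp_pos _)]
    exact Real.exp_lt_one_iff.mpr (by norm_num)
  have h2 := summable_pow_mul_geometric_of_norm_lt_one (R := ℝ) 2 hr
  have h1 := summable_pow_mul_geometric_of_norm_lt_one (R := ℝ) 1 hr
  have h0 := summable_pow_mul_geometric_of_norm_lt_one (R := ℝ) 0 hr
  apply (h2.add ((h1.mul_left 2).add h0)).congr
  intro i
  have he : Real.exp (-(1:ℝ)/2)^i = Real.exp (-(i:ℝ)/2) := by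
    rw [← Real.exp_nat_mul]; ring_nf
  simp only [← he]; ring

lemma my_tail (t : ℝ) (ht : 1 ≤ t) :
    t * Real.log t * Real.exp (-t/2) ≤ ∑' i : ℕ, Real.exp (-(i:ℝ)/2) * ((i:ℝ)+1)^2 := by
  set i := ⌊t⌋₊ with hi
  have ht0 : (0:ℝ) < t := by linarith
  have hi1 : (i:ℝ) ≤ t := Nat.floor_le ht0.le
  have hi2 : t < (i:ℝ) + 1 := Nat.lt_floor_add_one t
  have hlog : Real.log t ≤ t := (Real.log_le_sub_one_of_pos ht0).trans (by linarith)
  have hlog0 : 0 ≤ Real.log t := Real.log_nonneg ht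
  have key : t * Real.log t * Real.exp (-t/2) ≤ Real.exp (-(i:ℝ)/2) * ((i:ℝ)+1)^2 := by
    have h1 : t * Real.log t ≤ ((i:ℝ)+1)^2 := by nlinarith
    have h2 : Real.exp (-t/2) ≤ Real.exp (-(i:ℝ)/2) := Real.exp_le_exp.mpr (by linarith)
    calc t * Real.log t * Real.exp (-t/2) ≤ ((i:ℝ)+1)^2 * Real.exp (-(i:ℝ)/2) := by
          apply mul_le_mul h1 h2 (Real.exp_pos _).le (by positivity)
      _ = Real.exp (-(i:ℝ)/2) * ((i:ℝ)+1)^2 := by ring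
  exact key.trans (Summable.le_tsum my_summable i (fun j _ => by positivity))


lemma my_card_between {α : Type*} [DecidableEq α] (S u B : Finset α)
    (huS : u ⊆ S) (hBS : B ⊆ S) (hd : Disjoint u B) (k : ℕ) (hk : u.card ≤ k) :
    ((S.powersetCard k).filter (fun R => u ⊆ R ∧ Disjoint B R)).card
      = (S.card - u.card - B.card).choose (k - u.card) := by
  have hcard : ((S \ u) \ B).card = S.card - u.card - B.card := by
    rw [Finset.card_sdiff_of_subset (by
      intro x hx
      exact Finset.mem_sdiff.mpr ⟨hBS hx, fun hxu => (Finset.disjoint_left.mp hd hxu hx)⟩),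
      Finset.card_sdiff_of_subset huS]
  rw [← hcard, ← Finset.card_powersetCard]
  apply Finset.card_bij' (fun R _ => R \ u) (fun R₀ _ => R₀ ∪ u)
  · intro R hR
    simp only [Finset.mem_filter, Finset.mem_powersetCard] at hR
    obtain ⟨⟨hRS, hRcard⟩, huR, hBR⟩ := hR
    rw [Finset.mem_powersetCard]
    constructor
    · intro x hx
      rw [Finset.mem_sdiff] at hx
      exact Finset.mem_sdiff.mpr ⟨Finset.mem_sdiff.mpr ⟨hRS hx.1, hx.2⟩,
        fun hxB => Finset.disjoint_left.mp hBR hxB hx.1⟩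
    · rw [Finset.card_sdiff_of_subset huR, hRcard]
  · intro R₀ hR₀
    rw [Finset.mem_powersetCard] at hR₀
    obtain ⟨hsub, hcard₀⟩ := hR₀
    have hR₀S : R₀ ⊆ S := fun x hx => by
      have := hsub hx; simp only [Finset.mem_sdiff] at this; exact this.1.1
    have hR₀u : Disjoint R₀ u := Finset.disjoint_left.mpr (fun x hx hxu => by
      have := hsub hx; simp only [Finset.mem_sdiff] at this; exact this.1.2 hxu)
    have hR₀B : Disjoint B R₀ := Finset.disjoint_right.mpr (fun x hx hxB => by
      have := hsub hx; simp only [Finset.mem_sdiff] at this; exact this.2 hxB)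
    simp only [Finset.mem_filter, Finset.mem_powersetCard]
    refine ⟨⟨Finset.union_subset hR₀S huS, ?_⟩, Finset.subset_union_right, ?_⟩
    · rw [Finset.card_union_of_disjoint hR₀u, hcard₀]
      omega
    · exact Finset.disjoint_union_right.mpr ⟨hR₀B, hd.symm⟩
  · intro R hR
    simp only [Finset.mem_filter, Finset.mem_powersetCard] at hR
    exact Finset.sdiff_union_of_subset hR.2.1
  · intro R₀ hR₀
    rw [Finset.mem_powersetCard] at hR₀
    have hR₀u : Disjoint R₀ u := Finset.disjoint_left.mpr (fun x hx hxu => by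
      have := hR₀.1 hx; simp only [Finset.mem_sdiff] at this; exact this.1.2 hxu)
    exact Finset.union_sdiff_cancel_right hR₀u

lemma my_core (n s s' a b : ℕ) (C : ℝ)
    (hC0 : 0 ≤ C)
    (hC : ∀ t : ℝ, 1 ≤ t → t * Real.log t * Real.exp (-t/2) ≤ C)
    (h2 : s = 2*s') (hs' : 4 ≤ s') (hsn : s ≤ n) (ha : a ≤ 3)
    (ht : 1 ≤ (b:ℝ)*s/n) :
    ((b:ℝ)*s/n) * Real.log ((b:ℝ)*s/n) * (((n - a - b).choose (s-a) : ℝ)) / (n.choose s : ℝ)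
    ≤ 64 * C * (((n - a - b).choose (s'-a) : ℝ) / (n.choose s' : ℝ)) := by
  have hnpos : 0 < n := by omega
  have hn' : (0:ℝ) < n := by exact_mod_cast hnpos
  set t := (b:ℝ)*s/n with htdef
  have htt : 0 ≤ t * Real.log t := mul_nonneg (by linarith) (Real.log_nonneg ht)
  have hN2 : 0 < n.choose s' := Nat.choose_pos (by omega)
  have hN2' : (0:ℝ) < (n.choose s' : ℝ) := by exact_mod_cast hN2
  by_cases h0 : (n - a - b).choose (s-a) = 0
  · rw [h0]
    simp only [Nat.cast_zero, mul_zero, zero_div]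
    apply mul_nonneg (by linarith)
    apply div_nonneg (by positivity) (by positivity)
  · -- main case
    have hle : s - a ≤ n - a - b := by
      by_contra h
      exact h0 (Nat.choose_eq_zero_of_lt (by omega))
    have hsb : s + b ≤ n := by omega
    have hN1 : 0 < n.choose s := Nat.choose_pos hsn
    have hN1' : (0:ℝ) < (n.choose s : ℝ) := by exact_mod_cast hN1
    have hM2 : 0 < (n - a - b).choose (s'-a) := Nat.choose_pos (by omega)
    have hP : 0 < s.choose s' := Nat.choose_pos (by omega)
    have hPa : 0 < (s-a).choose (s'-a) := Nat.choose_pos (by omega)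
    -- chain identities
    have e1 : n.choose s * s.choose s' = n.choose s' * (n - s').choose s' := by
      have := Nat.choose_mul (n := n) (k := s) (s := s') (by omega)
      rwa [show s - s' = s' by omega] at this
    have e2 : (n-a-b).choose (s-a) * (s-a).choose (s'-a)
        = (n-a-b).choose (s'-a) * (n - s' - b).choose s' := by
      have := Nat.choose_mul (n := n-a-b) (k := s-a) (s := s'-a) (by omega)
      rwa [show n - a - b - (s' - a) = n - s' - b by omega,
           show s - a - (s' - a) = s' by omega] at this
    -- real casts first
    have ec1 : (n.choose s : ℝ) * (s.choose s' : ℝ)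
        = (n.choose s' : ℝ) * (((n - s').choose s' : ℕ) : ℝ) := by exact_mod_cast e1
    have ec2 : (((n - a - b).choose (s-a) : ℕ) : ℝ) * (((s-a).choose (s'-a) : ℕ) : ℝ)
        = (((n - a - b).choose (s'-a) : ℕ) : ℝ) * (((n - s' - b).choose s' : ℕ) : ℝ) := by
      exact_mod_cast e2
    have hP' : (0:ℝ) < ((s.choose s' : ℕ) : ℝ) := by exact_mod_cast hP
    have hPa' : (0:ℝ) < (((s-a).choose (s'-a) : ℕ) : ℝ) := by exact_mod_cast hPa
    have hM2' : (0:ℝ) < (((n - a - b).choose (s'-a) : ℕ) : ℝ) := by exact_mod_cast hM2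
    have key2 : ((s.choose s' : ℕ) : ℝ) ≤ 64 * (((s-a).choose (s'-a) : ℕ) : ℝ) := by
      have hB := my_lemB s' hs' a ha
      rw [← h2] at hB
      have h4 : (4:ℕ)^a ≤ 64 := by
        calc (4:ℕ)^a ≤ 4^3 := Nat.pow_le_pow_right (by norm_num) ha
          _ = 64 := by norm_num
      exact_mod_cast hB.trans (Nat.mul_le_mul_right _ h4)
    set N1 : ℝ := (n.choose s : ℝ)
    set N2 : ℝ := (n.choose s' : ℝ)
    set M1 : ℝ := ((n - a - b).choose (s-a) : ℝ)
    set M2 : ℝ := ((n - a - b).choose (s'-a) : ℝ)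
    set P : ℝ := (s.choose s' : ℝ)
    set Pa : ℝ := ((s-a).choose (s'-a) : ℝ)
    set D : ℝ := ((n - s' - b).choose s' : ℝ) with hDdef
    set E : ℝ := ((n - s').choose s' : ℝ) with hEdef
    have hE' : (0:ℝ) ≤ E := by rw [hEdef]; positivity
    have hD' : (0:ℝ) ≤ D := by rw [hDdef]; positivity
    -- key1 : D ≤ exp(-t/2) * E
    have key1 : D ≤ Real.exp (-t/2) * E := by
      have hA := my_lemA n s' hnpos b (n - s') (by omega) (by omega)
      have hq1 : (0:ℝ) ≤ 1 - (s':ℝ)/n := by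
        have h5 : (s':ℝ) ≤ n := by exact_mod_cast (show s' ≤ n by omega)
        have : (s':ℝ)/n ≤ 1 := by rw [div_le_one hn']; exact h5
        linarith
      have hq2 : 1 - (s':ℝ)/n ≤ Real.exp (-(s':ℝ)/n) := by
        have := Real.add_one_le_exp (-(s':ℝ)/n)
        rw [neg_div] at *
        linarith
      have hq3 : (1 - (s':ℝ)/n)^b ≤ Real.exp (-t/2) := by
        calc (1 - (s':ℝ)/n)^b ≤ (Real.exp (-(s':ℝ)/n))^b := pow_le_pow_left₀ hq1 hq2 b
          _ = Real.exp ((b:ℕ) * (-(s':ℝ)/n)) := by rw [Real.exp_nat_mul]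
          _ = Real.exp (-t/2) := by
              congr 1
              rw [htdef, h2]
              push_cast
              field_simp
      calc D ≤ (1 - (s':ℝ)/n)^b * E := hA
        _ ≤ Real.exp (-t/2) * E := mul_le_mul_of_nonneg_right hq3 hE'
    -- combine
    have h3 : t * Real.log t * (D * P) ≤ (64 * C) * (E * Pa) := by
      calc t * Real.log t * (D * P)
          ≤ t * Real.log t * ((Real.exp (-t/2) * E) * (64 * Pa)) := by
            apply mul_le_mul_of_nonneg_left _ htt
            exact mul_le_mul key1 key2 hP'.le (by positivity)
        _ = (t * Real.log t * Real.exp (-t/2)) * (64 * (E * Pa)) := by ring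
        _ ≤ C * (64 * (E * Pa)) := by
            apply mul_le_mul_of_nonneg_right (hC t ht)
            apply mul_nonneg (by norm_num) (mul_nonneg hE' hPa'.le)
        _ = (64 * C) * (E * Pa) := by ring
    -- assemble
    have goalEq : 64 * C * (M2 / N2) = (64 * C * M2) / N2 := by ring
    rw [goalEq, div_le_div_iff₀ hN1' hN2']
    have hmul : (t * Real.log t * M1 * N2) * (P * Pa) ≤ (64 * C * M2 * N1) * (P * Pa) := by
      calc (t * Real.log t * M1 * N2) * (P * Pa)
          = t * Real.log t * (M1 * Pa) * (N2 * P) := by ring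
        _ = t * Real.log t * (M2 * D) * (N2 * P) := by rw [ec2]
        _ = (M2 * N2) * (t * Real.log t * (D * P)) := by ring
        _ ≤ (M2 * N2) * ((64 * C) * (E * Pa)) :=
            mul_le_mul_of_nonneg_left h3 (mul_nonneg hM2'.le hN2'.le)
        _ = 64 * C * M2 * (N2 * E) * Pa := by ring
        _ = 64 * C * M2 * (N1 * P) * Pa := by rw [ec1]
        _ = (64 * C * M2 * N1) * (P * Pa) := by ring
    exact le_of_mul_le_mul_right hmul (mul_pos hP' hPa')

/-- Lemma 7 of the paper. The expected total excess-entropy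
`Σ t_u ln t_u` over all affinely independent triples `u` of `S ∪ K` with
excess `t_u = b_u·s/n ≥ 1` that are active in `R ∪ K` is at most
`64 · Σ_i e^{-i/2}(i+1)²` times the expected number of active triples for a
half-size sample `R'`. Here `c u` and `ρ u` denote the circumcenter and
circumradius of the triple `u`, and expectations over a uniformly random
`s`- (resp. `s'`-) subset are expressed as averages over `S.powersetCard s`
(resp. `S.powersetCard s'`). -/
theorem expected_excess_entropy_bound
    (S K : Finset (EuclideanSpace ℝ (Fin 2))) (n s s' : ℕ)
    (hS : S.card = n) (hK : K.card ≤ 3) (hSK : S ∩ K = ∅)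
    (h2 : s = 2 * s') (hs' : 4 ≤ s') (hsn : s ≤ n)
    (c : Finset (EuclideanSpace ℝ (Fin 2)) → EuclideanSpace ℝ (Fin 2))
    (ρ : Finset (EuclideanSpace ℝ (Fin 2)) → ℝ)
    (hc : ∀ u ∈ (S ∪ K).powersetCard 3,
      AffineIndependent ℝ (fun x : u => (x : EuclideanSpace ℝ (Fin 2))) →
      ∀ q ∈ u, dist (c u) q = ρ u) :
    (∑ R ∈ S.powersetCard s,
        ∑ u ∈ ((S ∪ K).powersetCard 3).filter (fun (u : Finset (EuclideanSpace ℝ (Fin 2))) =>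
            AffineIndependent ℝ (fun x : u => (x : EuclideanSpace ℝ (Fin 2))) ∧
            u ⊆ R ∪ K ∧
            ((S ∪ K).filter (fun q => dist (c u) q < ρ u)) ∩ (R ∪ K) = ∅ ∧
            1 ≤ (((S ∪ K).filter (fun q => dist (c u) q < ρ u)).card : ℝ) * (s : ℝ) / (n : ℝ)),
          ((((S ∪ K).filter (fun q => dist (c u) q < ρ u)).card : ℝ) * (s : ℝ) / (n : ℝ)) *
            Real.log ((((S ∪ K).filter (fun q => dist (c u) q < ρ u)).card : ℝ) *
              (s : ℝ) / (n : ℝ))) /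
      ((S.powersetCard s).card : ℝ)
    ≤ 64 * (∑' i : ℕ, Real.exp (-(i : ℝ) / 2) * ((i : ℝ) + 1) ^ 2) *
      ((∑ R' ∈ S.powersetCard s',
          ((((S ∪ K).powersetCard 3).filter (fun (u : Finset (EuclideanSpace ℝ (Fin 2))) =>
            AffineIndependent ℝ (fun x : u => (x : EuclideanSpace ℝ (Fin 2))) ∧
            u ⊆ R' ∪ K ∧
            ((S ∪ K).filter (fun q => dist (c u) q < ρ u)) ∩ (R' ∪ K) = ∅)).card : ℝ)) /
        ((S.powersetCard s').card : ℝ)) := by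
  classical
  
  set C : ℝ := ∑' i : ℕ, Real.exp (-(i : ℝ) / 2) * ((i : ℝ) + 1) ^ 2 with hCdef
  have hC : ∀ t : ℝ, 1 ≤ t → t * Real.log t * Real.exp (-t/2) ≤ C := my_tail
  have hC0 : 0 ≤ C := by
    have := hC 1 le_rfl
    simpa [Real.log_one] using this
  set T3 : Finset (Finset (EuclideanSpace ℝ (Fin 2))) := (S ∪ K).powersetCard 3 with hT3
  set Bu : Finset (EuclideanSpace ℝ (Fin 2)) → Finset (EuclideanSpace ℝ (Fin 2)) := fun u => (S ∪ K).filter (fun q => dist (c u) q < ρ u) with hBu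
  set tt : Finset (EuclideanSpace ℝ (Fin 2)) → ℝ := fun u => ((Bu u).card : ℝ) * (s:ℝ) / (n:ℝ) with htt
  set aff : Finset (EuclideanSpace ℝ (Fin 2)) → Prop := fun u => AffineIndependent ℝ (fun x : u => (x : EuclideanSpace ℝ (Fin 2))) with haffdef
  -- counts
  set cntS : Finset (EuclideanSpace ℝ (Fin 2)) → ℕ := fun u => ((S.powersetCard s).filter (fun R =>
      aff u ∧ u ⊆ R ∪ K ∧ Bu u ∩ (R ∪ K) = ∅ ∧ 1 ≤ tt u)).card with hcntS
  set cntS' : Finset (EuclideanSpace ℝ (Fin 2)) → ℕ := fun u => ((S.powersetCard s').filter (fun R =>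
      aff u ∧ u ⊆ R ∪ K ∧ Bu u ∩ (R ∪ K) = ∅)).card with hcntS'
  have hnpos : 0 < n := by omega
  have hc1 : ((S.powersetCard s).card : ℝ) = (n.choose s : ℝ) := by
    rw [Finset.card_powersetCard, hS]
  have hc2 : ((S.powersetCard s').card : ℝ) = (n.choose s' : ℝ) := by
    rw [Finset.card_powersetCard, hS]
  have hc1pos : (0:ℝ) < (n.choose s : ℝ) := by
    exact_mod_cast Nat.choose_pos hsn
  have hc2pos : (0:ℝ) < (n.choose s' : ℝ) := by
    exact_mod_cast Nat.choose_pos (show s' ≤ n by omega)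
  -- Step 1: swap sums on LHS
  have hL : (∑ R ∈ S.powersetCard s,
        ∑ u ∈ T3.filter (fun u =>
            aff u ∧ u ⊆ R ∪ K ∧ Bu u ∩ (R ∪ K) = ∅ ∧ 1 ≤ tt u),
          tt u * Real.log (tt u))
      = ∑ u ∈ T3, (cntS u : ℝ) * (tt u * Real.log (tt u)) := by
    calc (∑ R ∈ S.powersetCard s, ∑ u ∈ T3.filter (fun u =>
            aff u ∧ u ⊆ R ∪ K ∧ Bu u ∩ (R ∪ K) = ∅ ∧ 1 ≤ tt u),
          tt u * Real.log (tt u))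
        = ∑ R ∈ S.powersetCard s, ∑ u ∈ T3,
            (if aff u ∧ u ⊆ R ∪ K ∧ Bu u ∩ (R ∪ K) = ∅ ∧ 1 ≤ tt u
              then tt u * Real.log (tt u) else 0) := by
          exact Finset.sum_congr rfl (fun R _ => Finset.sum_filter _ _)
      _ = ∑ u ∈ T3, ∑ R ∈ S.powersetCard s,
            (if aff u ∧ u ⊆ R ∪ K ∧ Bu u ∩ (R ∪ K) = ∅ ∧ 1 ≤ tt u
              then tt u * Real.log (tt u) else 0) := Finset.sum_comm
      _ = ∑ u ∈ T3, (cntS u : ℝ) * (tt u * Real.log (tt u)) := by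
          refine Finset.sum_congr rfl (fun u _ => ?_)
          rw [← Finset.sum_filter, Finset.sum_const, nsmul_eq_mul]
  -- Step 2: swap sums on RHS
  have hR : (∑ R' ∈ S.powersetCard s',
        ((T3.filter (fun u => aff u ∧ u ⊆ R' ∪ K ∧ Bu u ∩ (R' ∪ K) = ∅)).card : ℝ))
      = ∑ u ∈ T3, (cntS' u : ℝ) := by
    calc (∑ R' ∈ S.powersetCard s',
        ((T3.filter (fun u => aff u ∧ u ⊆ R' ∪ K ∧ Bu u ∩ (R' ∪ K) = ∅)).card : ℝ))
        = ∑ R' ∈ S.powersetCard s', ∑ u ∈ T3,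
            (if aff u ∧ u ⊆ R' ∪ K ∧ Bu u ∩ (R' ∪ K) = ∅ then (1:ℝ) else 0) := by
          refine Finset.sum_congr rfl (fun R' _ => ?_)
          rw [Finset.card_filter]
          push_cast
          exact Finset.sum_congr rfl (fun u _ => by split <;> norm_num)
      _ = ∑ u ∈ T3, ∑ R' ∈ S.powersetCard s',
            (if aff u ∧ u ⊆ R' ∪ K ∧ Bu u ∩ (R' ∪ K) = ∅ then (1:ℝ) else 0) :=
          Finset.sum_comm
      _ = ∑ u ∈ T3, (cntS' u : ℝ) := by
          refine Finset.sum_congr rfl (fun u _ => ?_)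
          rw [← Finset.sum_filter, Finset.sum_const, nsmul_eq_mul, mul_one]
  -- termwise bound
  have hterm : ∀ u ∈ T3,
      (cntS u : ℝ) * (tt u * Real.log (tt u)) / ((n.choose s : ℝ))
        ≤ 64 * C * ((cntS' u : ℝ) / (n.choose s' : ℝ)) := by
    intro u hu
    have hu' : u ⊆ S ∪ K ∧ u.card = 3 := Finset.mem_powersetCard.mp hu
    by_cases hmain : aff u ∧ 1 ≤ tt u ∧ Bu u ∩ K = ∅
    · obtain ⟨haff, htu, hBK⟩ := hmain
      have hBS : Bu u ⊆ S := by
        intro x hx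
        have hx' := Finset.mem_filter.mp hx
        rcases Finset.mem_union.mp hx'.1 with h | h
        · exact h
        · exact absurd (Finset.mem_inter.mpr ⟨hx, h⟩) (by simp [hBK])
      have hdisj : Disjoint (u ∩ S) (Bu u) := by
        rw [Finset.disjoint_left]
        intro x hx hxB
        have hxu : x ∈ u := Finset.mem_inter.mp hx |>.1
        have hd := hc u hu haff x hxu
        have := (Finset.mem_filter.mp hxB).2
        rw [hd] at this
        exact lt_irrefl _ this
      have ha3 : (u ∩ S).card ≤ 3 :=
        le_trans (Finset.card_le_card Finset.inter_subset_left) (le_of_eq hu'.2)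
      have hpred : ∀ (R : Finset (EuclideanSpace ℝ (Fin 2))), R ⊆ S →
          ((u ⊆ R ∪ K ∧ Bu u ∩ (R ∪ K) = ∅) ↔ (u ∩ S ⊆ R ∧ Disjoint (Bu u) R)) := by
        intro R hRS
        constructor
        · rintro ⟨hsub, hint⟩
          constructor
          · intro x hx
            obtain ⟨hxu, hxS⟩ := Finset.mem_inter.mp hx
            rcases Finset.mem_union.mp (hsub hxu) with h | h
            · exact h
            · exact absurd (Finset.mem_inter.mpr ⟨hxS, h⟩) (by simp [hSK])
          · rw [Finset.disjoint_left]
            intro x hxB hxR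
            have : x ∈ Bu u ∩ (R ∪ K) :=
              Finset.mem_inter.mpr ⟨hxB, Finset.mem_union_left _ hxR⟩
            rw [hint] at this
            exact absurd this (Finset.notMem_empty x)
        · rintro ⟨hsub, hdisjR⟩
          constructor
          · intro x hx
            rcases Finset.mem_union.mp (hu'.1 hx) with h | h
            · exact Finset.mem_union_left _ (hsub (Finset.mem_inter.mpr ⟨hx, h⟩))
            · exact Finset.mem_union_right _ h
          · rw [Finset.eq_empty_iff_forall_notMem]
            intro x hx
            obtain ⟨hxB, hxRK⟩ := Finset.mem_inter.mp hx
            rcases Finset.mem_union.mp hxRK with h | h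
            · exact Finset.disjoint_left.mp hdisjR hxB h
            · exact absurd (Finset.mem_inter.mpr ⟨hxB, h⟩) (by simp [hBK])
      have hfcongr : ∀ k : ℕ, (u ∩ S).card ≤ k → ((S.powersetCard k).filter (fun R =>
            u ∩ S ⊆ R ∧ Disjoint (Bu u) R)).card
          = (n - (u ∩ S).card - (Bu u).card).choose (k - (u ∩ S).card) := by
        intro k hk
        rw [my_card_between S (u ∩ S) (Bu u) Finset.inter_subset_right hBS hdisj k hk, hS]
      have hcS : cntS u = (n - (u ∩ S).card - (Bu u).card).choose (s - (u ∩ S).card) := by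
        simp only [hcntS]
        have heq : Finset.filter (fun R => aff u ∧ u ⊆ R ∪ K ∧ Bu u ∩ (R ∪ K) = ∅ ∧ 1 ≤ tt u)
              (S.powersetCard s)
            = Finset.filter (fun R => u ∩ S ⊆ R ∧ Disjoint (Bu u) R) (S.powersetCard s) := by
          apply Finset.filter_congr
          intro R hR
          have hRS : R ⊆ S := (Finset.mem_powersetCard.mp hR).1
          constructor
          · rintro ⟨_, h1', h2', _⟩
            exact (hpred R hRS).mp ⟨h1', h2'⟩
          · intro h
            obtain ⟨h1', h2'⟩ := (hpred R hRS).mpr h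
            exact ⟨haff, h1', h2', htu⟩
        rw [heq, hfcongr s (by omega)]
      have hcS' : cntS' u = (n - (u ∩ S).card - (Bu u).card).choose (s' - (u ∩ S).card) := by
        simp only [hcntS']
        have heq : Finset.filter (fun R => aff u ∧ u ⊆ R ∪ K ∧ Bu u ∩ (R ∪ K) = ∅)
              (S.powersetCard s')
            = Finset.filter (fun R => u ∩ S ⊆ R ∧ Disjoint (Bu u) R) (S.powersetCard s') := by
          apply Finset.filter_congr
          intro R hR
          have hRS : R ⊆ S := (Finset.mem_powersetCard.mp hR).1
          constructor
          · rintro ⟨_, h1', h2'⟩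
            exact (hpred R hRS).mp ⟨h1', h2'⟩
          · intro h
            obtain ⟨h1', h2'⟩ := (hpred R hRS).mpr h
            exact ⟨haff, h1', h2'⟩
        rw [heq, hfcongr s' (by omega)]
      rw [hcS, hcS']
      have hcore := my_core n s s' (u ∩ S).card (Bu u).card C hC0 hC h2 hs' hsn ha3 htu
      have hrw : ((((n - (u ∩ S).card - (Bu u).card).choose (s - (u ∩ S).card)) : ℕ) : ℝ)
            * (tt u * Real.log (tt u)) / ((n.choose s : ℕ) : ℝ)
          = tt u * Real.log (tt u)
            * ((((n - (u ∩ S).card - (Bu u).card).choose (s - (u ∩ S).card)) : ℕ) : ℝ)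
            / ((n.choose s : ℕ) : ℝ) := by ring
      rw [hrw]
      exact hcore
    · -- degenerate case : cntS u = 0
      have hzero : cntS u = 0 := by
        simp only [hcntS]
        rw [Finset.filter_false_of_mem, Finset.card_empty]
        intro R hR hcon
        apply hmain
        refine ⟨hcon.1, hcon.2.2.2, ?_⟩
        have hsub : Bu u ∩ K ⊆ Bu u ∩ (R ∪ K) :=
          Finset.inter_subset_inter (le_refl _) Finset.subset_union_right
        rw [hcon.2.2.1] at hsub
        exact Finset.subset_empty.mp hsub
      rw [hzero]
      simp only [Nat.cast_zero, zero_mul, zero_div]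
      apply mul_nonneg (by positivity)
      exact div_nonneg (by positivity) hc2pos.le
  -- assemble
  rw [hL, hR, hc1, hc2, Finset.sum_div, Finset.sum_div, Finset.mul_sum]
  apply Finset.sum_le_sum
  intro u hu
  have := hterm u hu
  calc (cntS u : ℝ) * (tt u * Real.log (tt u)) / ((n.choose s : ℝ))
      ≤ 64 * C * ((cntS' u : ℝ) / (n.choose s' : ℝ)) := this
    _ = 64 * C * ((cntS' u : ℝ) / (n.choose s' : ℝ)) := rfl
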